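/- The function x_1(t)=-2/3-(1/3)e^{-3t/2}, x_2(t)=1/3-(1/3)e^{-3t/2}, x_3(t)=1/3+(2/3)e^{-3t/2} satisfies: x_2(t)=x_1(t)+1 for all t≥0, 0<x_3(t)-x_2(t)<1 for all t>0, and there exists a measurable α:[0,∞)→[0,1], namely α(t)=(x_3(t)-x_2(t))/2=e^{-3t/2}/2, such that ẋ_1=α, ẋ_2=-α+(x_3-x_2), ẋ_3=(x_2-x_3) for all t>0. -/

import Mathlib

open Real Set

lemma exp_deriv_aux (t c : ℝ) : HasDerivAt (fun t => c * Real.exp (-(3/2) * t))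
    (c * (-(3/2)) * Real.exp (-(3/2) * t)) t := by
  have h := ((hasDerivAt_id t).const_mul (-(3/2) : ℝ)).exp
  have := h.const_mul c
  simpa [mul_comm, mul_assoc, mul_left_comm] using this

/-- The explicit sliding-mode trajectory
`x₁ = -2/3 - e^{-3t/2}/3`, `x₂ = 1/3 - e^{-3t/2}/3`, `x₃ = 1/3 + 2 e^{-3t/2}/3`
satisfies `x₂ = x₁ + 1` for all `t ≥ 0`, `0 < x₃ - x₂ < 1` for all `t > 0`, and, with the
measurable coefficient `α(t) = (x₃(t) - x₂(t))/2 = e^{-3t/2}/2 ∈ [0,1]`, solves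
`ẋ₁ = α`, `ẋ₂ = -α + (x₃ - x₂)`, `ẋ₃ = x₂ - x₃` for all `t > 0`. -/
theorem stmt_9 (x1 x2 x3 α : ℝ → ℝ)
    (h1 : ∀ t, x1 t = -2/3 - (1/3) * Real.exp (-(3/2) * t))
    (h2 : ∀ t, x2 t = 1/3 - (1/3) * Real.exp (-(3/2) * t))
    (h3 : ∀ t, x3 t = 1/3 + (2/3) * Real.exp (-(3/2) * t))
    (hα : ∀ t, α t = Real.exp (-(3/2) * t) / 2) :
    (∀ t, α t = (x3 t - x2 t) / 2) ∧
    Measurable α ∧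
    (∀ t ≥ (0:ℝ), 0 ≤ α t ∧ α t ≤ 1) ∧
    (∀ t ≥ (0:ℝ), x2 t = x1 t + 1) ∧
    (∀ t > (0:ℝ), 0 < x3 t - x2 t ∧ x3 t - x2 t < 1) ∧
    (∀ t > (0:ℝ),
      HasDerivAt x1 (α t) t ∧
      HasDerivAt x2 (-(α t) + (x3 t - x2 t)) t ∧
      HasDerivAt x3 (x2 t - x3 t) t) := by
  refine ⟨fun t => by rw [hα, h3, h2]; ring, ?_, ?_, ?_, ?_, ?_⟩
  · have : α = fun t => Real.exp (-(3/2) * t) / 2 := funext hα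
    rw [this]
    fun_prop
  · intro t ht
    have h0 : 0 < Real.exp (-(3/2) * t) := Real.exp_pos _
    have h1' : Real.exp (-(3/2) * t) ≤ 1 := by
      rw [Real.exp_le_one_iff]; nlinarith
    rw [hα]; constructor <;> linarith
  · intro t _; rw [h1, h2]; ring
  · intro t ht
    have h0 : 0 < Real.exp (-(3/2) * t) := Real.exp_pos _
    have h1' : Real.exp (-(3/2) * t) < 1 := by
      rw [Real.exp_lt_one_iff]; nlinarith
    rw [h3, h2]; constructor <;> nlinarith
  · intro t _
    have hd1 : HasDerivAt x1 (α t) t := by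
      have : HasDerivAt (fun t => -2/3 - (1/3) * Real.exp (-(3/2) * t))
          (α t) t := by
        have := (exp_deriv_aux t (1/3)).const_sub (-2/3 : ℝ)
        rw [hα]
        exact this.congr_deriv (by ring)
      have hx : x1 = fun t => -2/3 - (1/3) * Real.exp (-(3/2) * t) := funext h1
      rw [hx]; exact this
    have hd2 : HasDerivAt x2 (-(α t) + (x3 t - x2 t)) t := by
      have : HasDerivAt (fun t => 1/3 - (1/3) * Real.exp (-(3/2) * t))
          (-(α t) + (x3 t - x2 t)) t := by
        have := (exp_deriv_aux t (1/3)).const_sub (1/3 : ℝ)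
        rw [hα, h3, h2]
        exact this.congr_deriv (by ring)
      have hx : x2 = fun t => 1/3 - (1/3) * Real.exp (-(3/2) * t) := funext h2
      rw [hx]
      convert this using 2
      simp [h2]
    have hd3 : HasDerivAt x3 (x2 t - x3 t) t := by
      have : HasDerivAt (fun t => 1/3 + (2/3) * Real.exp (-(3/2) * t))
          (x2 t - x3 t) t := by
        have := (exp_deriv_aux t (2/3)).const_add (1/3 : ℝ)
        rw [h2, h3]
        exact this.congr_deriv (by ring)
      have hx : x3 = fun t => 1/3 + (2/3) * Real.exp (-(3/2) * t) := funext h3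
      rw [hx]
      convert this using 2
      simp [h3]
    exact ⟨hd1, hd2, hd3⟩
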